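/- Continuity of the spherical splitting function β: Let d ≥ 1 and let x, u ∈ ℝ^{d+1} satisfy ‖x‖ = ‖u‖ = 1 and ⟪x, u⟫ = 0. Define β : 𝕊^d → ℝ by β(y) = 0 if y = x or y = −x, and β(y) = arccos(⟪y, u⟫ / √(1 − ⟪x, y⟫²)) · √(1 − ⟪x, y⟫²) otherwise. Then β is continuous on 𝕊^d (with the subspace topology). -/

import Mathlib

open scoped InnerProductSpace

noncomputable section

open Classical in
/-- The spherical splitting function `β` associated with a root `x` and an edge
direction `u`. -/
def sphBeta {d : ℕ} (x u : EuclideanSpace ℝ (Fin (d + 1)))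
    (y : EuclideanSpace ℝ (Fin (d + 1))) : ℝ :=
  if y = x ∨ y = -x then 0
  else Real.arccos (⟪y, u⟫_ℝ / Real.sqrt (1 - ⟪x, y⟫_ℝ ^ 2)) *
    Real.sqrt (1 - ⟪x, y⟫_ℝ ^ 2)

/-- Continuity of the spherical splitting function `β` on the unit sphere
`𝕊^d` (with the subspace topology). -/
theorem spherical_splitting_function_continuous
    (d : ℕ) (hd : 1 ≤ d)
    (x u : EuclideanSpace ℝ (Fin (d + 1)))
    (hx : ‖x‖ = 1) (hu : ‖u‖ = 1) (hxu : ⟪x, u⟫_ℝ = 0) :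
    Continuous fun y : Metric.sphere (0 : EuclideanSpace ℝ (Fin (d + 1))) 1 =>
      sphBeta x u (y : EuclideanSpace ℝ (Fin (d + 1))) := by
  have hsq : Continuous fun y : Metric.sphere (0 : EuclideanSpace ℝ (Fin (d + 1))) 1 =>
      Real.sqrt (1 - ⟪x, (y : EuclideanSpace ℝ (Fin (d + 1)))⟫_ℝ ^ 2) :=
    Real.continuous_sqrt.comp ((continuous_const.sub
      (((continuous_const.inner continuous_subtype_val)).pow 2)))
  rw [continuous_iff_continuousAt]
  intro y₀
  by_cases h : (y₀ : EuclideanSpace ℝ (Fin (d + 1))) = x ∨ (y₀ : EuclideanSpace ℝ (Fin (d + 1))) = -x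
  · have hval : sphBeta x u (y₀ : EuclideanSpace ℝ (Fin (d + 1))) = 0 := by simp [sphBeta, h]
    rw [ContinuousAt, hval]
    apply squeeze_zero_norm (a := fun y : Metric.sphere (0 : EuclideanSpace ℝ (Fin (d + 1))) 1 =>
      Real.pi * Real.sqrt (1 - ⟪x, (y : EuclideanSpace ℝ (Fin (d + 1)))⟫_ℝ ^ 2))
    · intro y
      by_cases hy : (y : EuclideanSpace ℝ (Fin (d + 1))) = x ∨ (y : EuclideanSpace ℝ (Fin (d + 1))) = -x
      · simp only [sphBeta, if_pos hy, norm_zero]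
        positivity
      · simp only [sphBeta, if_neg hy, Real.norm_eq_abs]
        rw [abs_mul, abs_of_nonneg (Real.sqrt_nonneg _)]
        gcongr
        · rw [abs_of_nonneg (Real.arccos_nonneg _)]
          exact Real.arccos_le_pi _
    · have hc : ContinuousAt (fun y : Metric.sphere (0 : EuclideanSpace ℝ (Fin (d + 1))) 1 =>
          Real.pi * Real.sqrt (1 - ⟪x, (y : EuclideanSpace ℝ (Fin (d + 1)))⟫_ℝ ^ 2)) y₀ :=
        (continuous_const.mul hsq).continuousAt
      have hve : ⟪x, (y₀ : EuclideanSpace ℝ (Fin (d + 1)))⟫_ℝ ^ 2 = 1 := by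
        rcases h with h | h
        · rw [h, real_inner_self_eq_norm_sq, hx]; norm_num
        · rw [h, inner_neg_right, real_inner_self_eq_norm_sq, hx]; norm_num
      unfold ContinuousAt at hc
      simp only [hve, sub_self, Real.sqrt_zero, mul_zero] at hc
      exact hc
  · push_neg at h
    obtain ⟨h1, h2⟩ := h
    have hy₀ : ‖(y₀ : EuclideanSpace ℝ (Fin (d + 1)))‖ = 1 := by
      simpa using (mem_sphere_zero_iff_norm.mp y₀.2)
    have hlt : ⟪x, (y₀ : EuclideanSpace ℝ (Fin (d + 1)))⟫_ℝ ^ 2 < 1 := by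
      rw [sq_lt_one_iff_abs_lt_one, abs_lt]
      constructor
      · have := (inner_lt_one_iff_real_of_norm_eq_one (by rw [norm_neg]; exact hx) hy₀).2
          (by exact fun hc => h2 (by rw [← hc]) : -x ≠ (y₀ : EuclideanSpace ℝ (Fin (d + 1))))
        rw [inner_neg_left] at this
        linarith
      · exact (inner_lt_one_iff_real_of_norm_eq_one hx hy₀).2
          (fun hc => h1 hc.symm)
    have hpos : (0:ℝ) < Real.sqrt (1 - ⟪x, (y₀ : EuclideanSpace ℝ (Fin (d + 1)))⟫_ℝ ^ 2) :=
      Real.sqrt_pos.mpr (by linarith)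
    have hopen : IsOpen {y : Metric.sphere (0 : EuclideanSpace ℝ (Fin (d + 1))) 1 | (y : EuclideanSpace ℝ (Fin (d + 1))) ≠ x ∧ (y : EuclideanSpace ℝ (Fin (d + 1))) ≠ -x} := by
      have : {y : Metric.sphere (0 : EuclideanSpace ℝ (Fin (d + 1))) 1 | (y : EuclideanSpace ℝ (Fin (d + 1))) ≠ x ∧ (y : EuclideanSpace ℝ (Fin (d + 1))) ≠ -x} =
          (Subtype.val) ⁻¹' ({x}ᶜ ∩ {-x}ᶜ) := rfl
      rw [this]
      exact (((isClosed_singleton.isOpen_compl).inter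
        (isClosed_singleton.isOpen_compl))).preimage continuous_subtype_val
    have hmem : y₀ ∈ {y : Metric.sphere (0 : EuclideanSpace ℝ (Fin (d + 1))) 1 | (y : EuclideanSpace ℝ (Fin (d + 1))) ≠ x ∧ (y : EuclideanSpace ℝ (Fin (d + 1))) ≠ -x} := ⟨h1, h2⟩
    have heq : (fun y : Metric.sphere (0 : EuclideanSpace ℝ (Fin (d + 1))) 1 => sphBeta x u (y : EuclideanSpace ℝ (Fin (d + 1)))) =ᶠ[nhds y₀]
        fun y : Metric.sphere (0 : EuclideanSpace ℝ (Fin (d + 1))) 1 =>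
          Real.arccos (⟪(y : EuclideanSpace ℝ (Fin (d + 1))), u⟫_ℝ / Real.sqrt (1 - ⟪x, (y : EuclideanSpace ℝ (Fin (d + 1)))⟫_ℝ ^ 2)) *
            Real.sqrt (1 - ⟪x, (y : EuclideanSpace ℝ (Fin (d + 1)))⟫_ℝ ^ 2) := by
      filter_upwards [hopen.mem_nhds hmem] with y hy
      simp only [sphBeta, if_neg (not_or.mpr hy)]
    refine ContinuousAt.congr ?_ heq.symm
    have hinner : Continuous fun y : Metric.sphere (0 : EuclideanSpace ℝ (Fin (d + 1))) 1 => ⟪(y : EuclideanSpace ℝ (Fin (d + 1))), u⟫_ℝ :=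
      (continuous_subtype_val.inner continuous_const)
    exact ((Real.continuous_arccos.continuousAt).comp
      ((hinner.continuousAt).div (hsq.continuousAt) hpos.ne')).mul hsq.continuousAt
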